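/- Let R be a subdirect product of SBM algebras A_1, …, A_n, let i ≠ j and α ≺ β ≤ θ_{A_i} in Con(A_i), γ ≺ δ ≤ θ_{A_j} in Con(A_j). If (α,β) can be separated from (γ,δ) in R, then (γ,δ) can be separated from (α,β) in R; that is, the relation 'cannot be separated' is symmetric. -/

import Mathlib

namespace SBMPaper

variable {A : Type*}

/-- A Mal'tsev operation: `m a b b = m b b a = a`. -/
def IsMaltsevOp (m : A → A → A → A) : Prop :=
  ∀ a b : A, m a b b = a ∧ m b b a = a

/-- Containment of binary relations. -/
def RelLE (α β : A → A → Prop) : Prop := ∀ a b : A, α a b → β a b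

/-- `p(β) ⊆ α` : the unary map `p` maps the relation `β` into `α`. -/
def PolMaps (p : A → A) (β α : A → A → Prop) : Prop :=
  ∀ a b : A, β a b → α (p a) (p b)

/-- `α ≺ β`: a prime (covering) interval with respect to the class `Cong` of congruences. -/
def PrimeCov (Cong : (A → A → Prop) → Prop) (α β : A → A → Prop) : Prop :=
  RelLE α β ∧ α ≠ β ∧
    ∀ γ : A → A → Prop, Cong γ → RelLE α γ → RelLE γ β → γ = α ∨ γ = β

/-- An `(α,β)`-minimal set with respect to the class `Pol` of unary polynomials:
an image `p(A)` of a unary polynomial with `p(β) ⊄ α`, minimal under inclusion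
among all such images. -/
def IsMinSetP (Pol : (A → A) → Prop) (α β : A → A → Prop) (U : Set A) : Prop :=
  (∃ p, Pol p ∧ Set.range p = U ∧ ¬ PolMaps p β α) ∧
  ∀ U' : Set A, (∃ p, Pol p ∧ Set.range p = U' ∧ ¬ PolMaps p β α) → U' ⊆ U → U' = U

/-- Unary polynomials of a Mal'tsev algebra `(A; m)`. -/
inductive MPol (m : A → A → A → A) : (A → A) → Prop
  | id : MPol m fun x => x
  | const (a : A) : MPol m fun _ => a
  | mc {p q r : A → A} : MPol m p → MPol m q → MPol m r →
      MPol m fun x => m (p x) (q x) (r x)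

/-- Congruences of a Mal'tsev algebra `(A; m)`. -/
def IsMCong (m : A → A → A → A) (α : A → A → Prop) : Prop :=
  Equivalence α ∧
  ∀ a a' b b' c c' : A, α a a' → α b b' → α c c' → α (m a b c) (m a' b' c')

/-- A congruence of an algebra with a binary operation `dot` and a ternary operation `m`. -/
def IsCong (dot : A → A → A) (m : A → A → A → A) (α : A → A → Prop) : Prop :=
  Equivalence α ∧
  (∀ a a' b b' : A, α a a' → α b b' → α (dot a b) (dot a' b')) ∧
  (∀ a a' b b' c c' : A, α a a' → α b b' → α c c' → α (m a b c) (m a' b' c'))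

/-- A semilattice block Mal'tsev (SBM) algebra `(A; dot, m)` with witnessing congruence `σ`:
`σ` is a congruence, the operation induced by `dot` on `A/σ` is a semilattice operation,
`dot` is the first projection on `σ`-blocks, `m` is Mal'tsev on `σ`-blocks,
`m(a,b,c) ≡_σ (a·b)·c`, and `x·(x·y) = x·y`. -/
def IsSBM (dot : A → A → A) (m : A → A → A → A) (σ : A → A → Prop) : Prop :=
  IsCong dot m σ ∧
  (∀ a b : A, σ (dot a b) (dot b a)) ∧
  (∀ a b c : A, σ (dot (dot a b) c) (dot a (dot b c))) ∧
  (∀ a b : A, σ a b → dot a b = a) ∧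
  (∀ a b : A, σ a b → m a b b = a ∧ m b b a = a) ∧
  (∀ a b c : A, σ (m a b c) (dot (dot a b) c)) ∧
  (∀ x y : A, dot x (dot x y) = dot x y)

/-- `a` belongs to the greatest `σ`-block `max(A)` of the semilattice `A/σ`. -/
def InMax (dot : A → A → A) (σ : A → A → Prop) (a : A) : Prop :=
  ∀ b : A, σ (dot b a) a

/-- The equivalence relation `θ_A` whose blocks are `max(A)` and the singletons outside it. -/
def ThetaA (dot : A → A → A) (σ : A → A → Prop) (a b : A) : Prop :=
  a = b ∨ (InMax dot σ a ∧ InMax dot σ b)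

/-- Unary polynomials of an SBM algebra `(A; dot, m)`. -/
inductive UPol (dot : A → A → A) (m : A → A → A → A) : (A → A) → Prop
  | id : UPol dot m fun x => x
  | const (a : A) : UPol dot m fun _ => a
  | dotc {p q : A → A} : UPol dot m p → UPol dot m q →
      UPol dot m fun x => dot (p x) (q x)
  | mc {p q r : A → A} : UPol dot m p → UPol dot m q → UPol dot m r →
      UPol dot m fun x => m (p x) (q x) (r x)

/-- `A` has a minimal (neutral) element. -/
def HasMinElt (dot : A → A → A) : Prop :=
  ∃ a : A, ∀ b : A, dot a b = b ∧ dot b a = b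

/-- `a` is an `αβ`-split element. -/
def IsSplit (dot : A → A → A) (α β : A → A → Prop) (a : A) : Prop :=
  ∃ b c : A, β b c ∧ ¬ α (dot a b) (dot a c)

/-- Unary polynomials of a binary relation `S ⊆ A × B`: pairs of maps generated from
the identity and the constant pairs taken from `S`, closed under coordinatewise
`dot` and `m`. -/
inductive BPol {B : Type*} (dA : A → A → A) (mA : A → A → A → A)
    (dB : B → B → B) (mB : B → B → B → B) (S : A → B → Prop) :
    (A → A) → (B → B) → Prop
  | id : BPol dA mA dB mB S (fun x => x) (fun y => y)
  | const (a : A) (b : B) (h : S a b) : BPol dA mA dB mB S (fun _ => a) (fun _ => b)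
  | dotc {p₁ q₁ : A → A} {p₂ q₂ : B → B} : BPol dA mA dB mB S p₁ p₂ →
      BPol dA mA dB mB S q₁ q₂ →
      BPol dA mA dB mB S (fun x => dA (p₁ x) (q₁ x)) (fun y => dB (p₂ y) (q₂ y))
  | mc {p₁ q₁ r₁ : A → A} {p₂ q₂ r₂ : B → B} : BPol dA mA dB mB S p₁ p₂ →
      BPol dA mA dB mB S q₁ q₂ → BPol dA mA dB mB S r₁ r₂ →
      BPol dA mA dB mB S (fun x => mA (p₁ x) (q₁ x) (r₁ x))
        (fun y => mB (p₂ y) (q₂ y) (r₂ y))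

section Subdirect

variable {n : ℕ} {F : Fin n → Type*}

/-- `R` is a subdirect product of the algebras `F 1, …, F n`. -/
def SubdirectProd (dot : ∀ i, F i → F i → F i) (m : ∀ i, F i → F i → F i → F i)
    (R : Set (∀ i, F i)) : Prop :=
  R.Nonempty ∧
  (∀ x ∈ R, ∀ y ∈ R, (fun i => dot i (x i) (y i)) ∈ R) ∧
  (∀ x ∈ R, ∀ y ∈ R, ∀ z ∈ R, (fun i => m i (x i) (y i) (z i)) ∈ R) ∧
  (∀ (i : Fin n) (a : F i), ∃ x ∈ R, x i = a)

/-- Unary polynomials of a relation `R`: families of maps generated from the identity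
family and constant families taken from `R`, closed under coordinatewise `dot` and `m`. -/
inductive RPol (dot : ∀ i, F i → F i → F i) (m : ∀ i, F i → F i → F i → F i)
    (R : Set (∀ i, F i)) : (∀ i, F i → F i) → Prop
  | id : RPol dot m R fun _ x => x
  | const (a : ∀ i, F i) (ha : a ∈ R) : RPol dot m R fun i _ => a i
  | dotc {p q : ∀ i, F i → F i} : RPol dot m R p → RPol dot m R q →
      RPol dot m R fun i x => dot i (p i x) (q i x)
  | mc {p q r : ∀ i, F i → F i} : RPol dot m R p → RPol dot m R q → RPol dot m R r →
      RPol dot m R fun i x => m i (p i x) (q i x) (r i x)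

/-- The interval `(α,β)` at coordinate `i` can be separated from `(γ,δ)` at
coordinate `j` in `R`. -/
def SepIn (dot : ∀ i, F i → F i → F i) (m : ∀ i, F i → F i → F i → F i)
    (R : Set (∀ i, F i)) (i : Fin n) (α β : F i → F i → Prop)
    (j : Fin n) (γ δ : F j → F j → Prop) : Prop :=
  ∃ p, RPol dot m R p ∧ ¬ PolMaps (p i) β α ∧ PolMaps (p j) δ γ

/-- `(i, α, β) ∈ I_R` : `α ≺ β ≤ θ_{A_i}` is a prime interval of congruences of `F i`. -/
def InIR (dot : ∀ i, F i → F i → F i) (m : ∀ i, F i → F i → F i → F i)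
    (σ : ∀ i, F i → F i → Prop) (i : Fin n) (α β : F i → F i → Prop) : Prop :=
  IsCong (dot i) (m i) α ∧ IsCong (dot i) (m i) β ∧
  PrimeCov (IsCong (dot i) (m i)) α β ∧ RelLE β (ThetaA (dot i) (σ i))

end Subdirect

section CSP

variable {V : Type*} {D : V → Type*}

/-- A constraint: a scope `W ⊆ V` together with a relation on `∏_{v ∈ W} D v`. -/
abbrev Constr (V : Type*) (D : V → Type*) := Σ W : Set V, Set (∀ v : W, D v.1)

/-- Solutions of the restricted instance `P_W` (recorded as full assignments;
only the values on `W` are constrained). -/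
def SolOn (C : Set (Constr V D)) (W : Set V) : Set (∀ v, D v) :=
  {φ | ∀ c ∈ C, ∃ x ∈ c.2, ∀ u : c.1, u.1 ∈ W → x u = φ u.1}

/-- The binary relation `S_{vw}` of partial solutions on `{v, w}`. -/
def SvwRel (C : Set (Constr V D)) (v w : V) (a : D v) (b : D w) : Prop :=
  ∃ φ ∈ SolOn C {v, w}, φ v = a ∧ φ w = b

/-- The instance is tightened : `A_v = S_v` for every variable `v`. -/
def Tight (C : Set (Constr V D)) : Prop :=
  ∀ (v : V) (a : D v), ∃ φ ∈ SolOn C {v}, φ v = a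

/-- The restricted instance `P_W` is minimal: every tuple of every constraint of `P_W`
extends to a solution of `P_W`. -/
def MinOn (C : Set (Constr V D)) (W : Set V) : Prop :=
  ∀ c ∈ C, ∀ x ∈ c.2, ∃ φ ∈ SolOn C W, ∀ u : c.1, u.1 ∈ W → φ u.1 = x u

/-- `k`-minimality: `P_W` is minimal for every `k`-element `W ⊆ V`. -/
def KMin (C : Set (Constr V D)) (k : ℕ) : Prop :=
  ∀ W : Set V, W.ncard = k → MinOn C W

/-- `(v, α, β) ∈ I_P` : `α ≺ β ≤ θ_{A_v}` is a prime interval of congruences of `D v`. -/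
def InIP (dot : ∀ v, D v → D v → D v) (m : ∀ v, D v → D v → D v → D v)
    (σ : ∀ v, D v → D v → Prop) (v : V) (α β : D v → D v → Prop) : Prop :=
  IsCong (dot v) (m v) α ∧ IsCong (dot v) (m v) β ∧
  PrimeCov (IsCong (dot v) (m v)) α β ∧ RelLE β (ThetaA (dot v) (σ v))

/-- `(α,β)` (at `v`) can be separated from `(γ,δ)` (at `w`) in `S_{vw}`. -/
def SepPair (dot : ∀ v, D v → D v → D v) (m : ∀ v, D v → D v → D v → D v)
    (C : Set (Constr V D)) (v : V) (α β : D v → D v → Prop)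
    (w : V) (γ δ : D w → D w → Prop) : Prop :=
  ∃ p q, BPol (dot v) (m v) (dot w) (m w) (SvwRel C v w) p q ∧
    ¬ PolMaps p β α ∧ PolMaps q δ γ

/-- The coherent set `W_{vαβ}`. -/
def WCoh (dot : ∀ v, D v → D v → D v) (m : ∀ v, D v → D v → D v → D v)
    (σ : ∀ v, D v → D v → Prop) (C : Set (Constr V D))
    (v : V) (α β : D v → D v → Prop) : Set V :=
  {w | ∃ γ δ : D w → D w → Prop, InIP dot m σ w γ δ ∧
    ¬ SepPair dot m C v α β w γ δ}

/-- Block-minimality: `P_{W_{vαβ}}` is minimal for every `(v,α,β) ∈ I_P`. -/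
def BlockMin (dot : ∀ v, D v → D v → D v) (m : ∀ v, D v → D v → D v → D v)
    (σ : ∀ v, D v → D v → Prop) (C : Set (Constr V D)) : Prop :=
  ∀ (v : V) (α β : D v → D v → Prop), InIP dot m σ v α β →
    MinOn C (WCoh dot m σ C v α β)

/-- A `ḡ`-ensemble for the instance `C`. -/
def IsEnsemble (dot : ∀ v, D v → D v → D v) (m : ∀ v, D v → D v → D v → D v)
    (σ : ∀ v, D v → D v → Prop) (C : Set (Constr V D))
    (g : ∀ u, D u → D u → Prop)
    (Φ : ∀ (v : V) (α β : D v → D v → Prop), InIP dot m σ v α β → ∀ u, D u) : Prop :=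
  (∀ (v : V) (α β : D v → D v → Prop) (h : InIP dot m σ v α β),
    Φ v α β h ∈ SolOn C (WCoh dot m σ C v α β)) ∧
  (∀ (v : V) (α β : D v → D v → Prop) (h : InIP dot m σ v α β)
      (w : V) (γ δ : D w → D w → Prop) (h' : InIP dot m σ w γ δ)
      (u : V), u ∈ WCoh dot m σ C v α β → u ∈ WCoh dot m σ C w γ δ →
    g u (Φ v α β h u) (Φ w γ δ h' u)) ∧
  (∀ c ∈ C, ∃ x ∈ c.2, ∀ (u : c.1) (v : V) (α β : D v → D v → Prop)
      (h : InIP dot m σ v α β), u.1 ∈ WCoh dot m σ C v α β →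
    g u.1 (x u) (Φ v α β h u.1))

end CSP

end SBMPaper

namespace SBMPaper


section BlockLemmas

variable {A : Type*} {dot : A → A → A} {m : A → A → A → A} {σ : A → A → Prop}

lemma inmax_congr (h : IsSBM dot m σ) {x y : A} (hxy : σ x y)
    (hx : InMax dot σ x) : InMax dot σ y := by
  intro b
  have h1 : σ (dot b y) (dot b x) := h.1.2.1 b b y x (h.1.1.refl b) (h.1.1.symm hxy)
  exact h.1.1.trans (h.1.1.trans h1 (hx b)) hxy

lemma sigma_of_inmax (h : IsSBM dot m σ) {x y : A}
    (hx : InMax dot σ x) (hy : InMax dot σ y) : σ x y := by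
  have h1 : σ (dot y x) x := hx y
  have h2 : σ (dot x y) y := hy x
  have h3 : σ (dot x y) (dot y x) := h.2.1 x y
  exact h.1.1.trans (h.1.1.symm h1) (h.1.1.trans (h.1.1.symm h3) h2)

lemma inmax_dot_right (h : IsSBM dot m σ) {y : A} (hy : InMax dot σ y) (c : A) :
    InMax dot σ (dot c y) := by
  intro b
  have h1 : σ (dot (dot b c) y) (dot b (dot c y)) := h.2.2.1 b c y
  have h2 : σ (dot (dot b c) y) y := hy (dot b c)
  have h3 : σ (dot c y) y := hy c
  exact h.1.1.trans (h.1.1.trans (h.1.1.symm h1) h2) (h.1.1.symm h3)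

lemma dot_absorb (h : IsSBM dot m σ) {x : A} (hx : InMax dot σ x) (c : A) :
    dot x c = x := by
  have hw : InMax dot σ (dot x c) := by
    intro b
    have h1 : σ (dot (dot b x) c) (dot b (dot x c)) := h.2.2.1 b x c
    have h2 : σ (dot (dot b x) c) (dot x c) :=
      h.1.2.1 _ _ _ _ (hx b) (h.1.1.refl c)
    exact h.1.1.trans (h.1.1.symm h1) h2
  have hs : σ x (dot x c) := sigma_of_inmax h hx hw
  have h4 : dot x (dot x c) = x := h.2.2.2.1 _ _ hs
  have h5 : dot x (dot x c) = dot x c := h.2.2.2.2.2.2 x c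
  rw [h5] at h4
  exact h4

lemma inmax_m (h : IsSBM dot m σ) {a b c : A}
    (habc : InMax dot σ a ∨ InMax dot σ b ∨ InMax dot σ c) :
    InMax dot σ (m a b c) := by
  have hσ : σ (m a b c) (dot (dot a b) c) := h.2.2.2.2.2.1 a b c
  apply inmax_congr h (h.1.1.symm hσ)
  rcases habc with ha | hb | hc
  · rw [dot_absorb h ha b, dot_absorb h ha c]; exact ha
  · have h1 : InMax dot σ (dot a b) := inmax_dot_right h hb a
    rw [dot_absorb h h1 c]; exact h1
  · exact inmax_dot_right h hc (dot a b)

lemma malt1 (h : IsSBM dot m σ) {a b : A} (hs : σ a b) : m a b b = a :=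
  (h.2.2.2.2.1 a b hs).1

lemma malt2 (h : IsSBM dot m σ) {a b : A} (hs : σ a b) : m b b a = a :=
  (h.2.2.2.2.1 a b hs).2

end BlockLemmas

section RPolLemmas

variable {n : ℕ} {F : Fin n → Type*}
variable {dot : ∀ i, F i → F i → F i} {m : ∀ i, F i → F i → F i → F i}
variable {R : Set (∀ i, F i)}

lemma rpol_mem (hR : SubdirectProd dot m R) {p : ∀ i, F i → F i}
    (hp : RPol dot m R p) {x : ∀ i, F i} (hx : x ∈ R) :
    (fun i => p i (x i)) ∈ R := by
  induction hp with
  | id => exact hx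
  | const a ha => exact ha
  | dotc hp hq ihp ihq => exact hR.2.1 _ ihp _ ihq
  | mc hp hq hr ihp ihq ihr => exact hR.2.2.1 _ ihp _ ihq _ ihr

lemma rpol_comp {p q : ∀ i, F i → F i} (hp : RPol dot m R p) (hq : RPol dot m R q) :
    RPol dot m R (fun i x => p i (q i x)) := by
  induction hp with
  | id => exact hq
  | const a ha => exact RPol.const a ha
  | dotc h1 h2 ih1 ih2 => exact RPol.dotc ih1 ih2
  | mc h1 h2 h3 ih1 ih2 ih3 => exact RPol.mc ih1 ih2 ih3

lemma rpol_maps {p : ∀ i, F i → F i} (hp : RPol dot m R p) {k : Fin n}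
    {θ : F k → F k → Prop} (hθ : IsCong (dot k) (m k) θ) :
    ∀ a b, θ a b → θ (p k a) (p k b) := by
  induction hp with
  | id => exact fun a b hab => hab
  | const a _ => exact fun _ _ _ => hθ.1.refl _
  | dotc h1 h2 ih1 ih2 => exact fun a b hab => hθ.2.1 _ _ _ _ (ih1 a b hab) (ih2 a b hab)
  | mc h1 h2 h3 ih1 ih2 ih3 =>
      exact fun a b hab => hθ.2.2 _ _ _ _ _ _ (ih1 a b hab) (ih2 a b hab) (ih3 a b hab)

end RPolLemmas

section MoverLemmas

variable {n : ℕ} {F : Fin n → Type*}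
variable {dot : ∀ i, F i → F i → F i} {m : ∀ i, F i → F i → F i → F i}
    {σ : ∀ i, F i → F i → Prop} {R : Set (∀ i, F i)}
variable {i j : Fin n} {α β : F i → F i → Prop} {γ δ : F j → F j → Prop}

lemma exists_mover (hR : SubdirectProd dot m R)
    (hcα : IsCong (dot i) (m i) α) (hcβ : IsCong (dot i) (m i) β)
    (hαβ : RelLE α β)
    (hprime : ∀ r, IsCong (dot i) (m i) r → RelLE α r → RelLE r β → r = α ∨ r = β)
    (hcδ : IsCong (dot j) (m j) δ)
    {p : ∀ k, F k → F k} (hp : RPol dot m R p) (hpd : PolMaps (p j) δ γ)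
    (hpa : ¬ PolMaps (p i) β α) :
    ∀ a b, β a b → ¬ α a b →
      ∃ q, RPol dot m R q ∧ PolMaps (q j) δ γ ∧ ¬ α (q i a) (q i b) := by
  have hcong : IsCong (dot i) (m i) (fun a b =>
      β a b ∧ ∀ q, RPol dot m R q → PolMaps (q j) δ γ → α (q i a) (q i b)) := by
    refine ⟨⟨?_, ?_, ?_⟩, ?_, ?_⟩
    · exact fun a => ⟨hcβ.1.refl a, fun q _ _ => hcα.1.refl _⟩
    · exact fun h => ⟨hcβ.1.symm h.1, fun q hq hqd => hcα.1.symm (h.2 q hq hqd)⟩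
    · exact fun h1 h2 => ⟨hcβ.1.trans h1.1 h2.1,
        fun q hq hqd => hcα.1.trans (h1.2 q hq hqd) (h2.2 q hq hqd)⟩
    · intro x x' y y' hx hy
      refine ⟨hcβ.2.1 _ _ _ _ hx.1 hy.1, ?_⟩
      intro q hq hqd
      obtain ⟨yb, hyb, hyb2⟩ := hR.2.2.2 i y
      obtain ⟨xa, hxa, hxa2⟩ := hR.2.2.2 i x'
      have h1 : α (q i (dot i x (yb i))) (q i (dot i x' (yb i))) :=
        hx.2 (fun k z => q k (dot k z (yb k)))
        (rpol_comp hq (RPol.dotc RPol.id (RPol.const yb hyb)))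
        (fun u v huv => hqd _ _ (hcδ.2.1 _ _ _ _ huv (hcδ.1.refl _)))
      rw [hyb2] at h1
      have h2 : α (q i (dot i (xa i) y)) (q i (dot i (xa i) y')) :=
        hy.2 (fun k z => q k (dot k (xa k) z))
        (rpol_comp hq (RPol.dotc (RPol.const xa hxa) RPol.id))
        (fun u v huv => hqd _ _ (hcδ.2.1 _ _ _ _ (hcδ.1.refl _) huv))
      rw [hxa2] at h2
      exact hcα.1.trans h1 h2
    · intro x x' y y' z z' hx hy hz
      refine ⟨hcβ.2.2 _ _ _ _ _ _ hx.1 hy.1 hz.1, ?_⟩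
      intro q hq hqd
      obtain ⟨ya, hya, hya2⟩ := hR.2.2.2 i y
      obtain ⟨za, hza, hza2⟩ := hR.2.2.2 i z
      obtain ⟨xb, hxb, hxb2⟩ := hR.2.2.2 i x'
      obtain ⟨yc, hyc, hyc2⟩ := hR.2.2.2 i y'
      have h1 : α (q i (m i x (ya i) (za i))) (q i (m i x' (ya i) (za i))) :=
        hx.2 (fun k w => q k (m k w (ya k) (za k)))
        (rpol_comp hq (RPol.mc RPol.id (RPol.const ya hya) (RPol.const za hza)))
        (fun u v huv => hqd _ _
          (hcδ.2.2 _ _ _ _ _ _ huv (hcδ.1.refl _) (hcδ.1.refl _)))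
      rw [hya2, hza2] at h1
      have h2 : α (q i (m i (xb i) y (za i))) (q i (m i (xb i) y' (za i))) :=
        hy.2 (fun k w => q k (m k (xb k) w (za k)))
        (rpol_comp hq (RPol.mc (RPol.const xb hxb) RPol.id (RPol.const za hza)))
        (fun u v huv => hqd _ _
          (hcδ.2.2 _ _ _ _ _ _ (hcδ.1.refl _) huv (hcδ.1.refl _)))
      rw [hxb2, hza2] at h2
      have h3 : α (q i (m i (xb i) (yc i) z)) (q i (m i (xb i) (yc i) z')) :=
        hz.2 (fun k w => q k (m k (xb k) (yc k) w))
        (rpol_comp hq (RPol.mc (RPol.const xb hxb) (RPol.const yc hyc) RPol.id))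
        (fun u v huv => hqd _ _
          (hcδ.2.2 _ _ _ _ _ _ (hcδ.1.refl _) (hcδ.1.refl _) huv))
      rw [hxb2, hyc2] at h3
      exact hcα.1.trans h1 (hcα.1.trans h2 h3)
  have hle1 : RelLE α (fun a b =>
      β a b ∧ ∀ q, RPol dot m R q → PolMaps (q j) δ γ → α (q i a) (q i b)) :=
    fun a b hab => ⟨hαβ a b hab, fun q hq _ => rpol_maps hq hcα a b hab⟩
  have hle2 : RelLE (fun a b =>
      β a b ∧ ∀ q, RPol dot m R q → PolMaps (q j) δ γ → α (q i a) (q i b)) β :=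
    fun a b h => h.1
  rcases hprime _ hcong hle1 hle2 with he | he
  · intro a b hab hnab
    by_contra hno
    push_neg at hno
    have hΛab : β a b ∧ ∀ q, RPol dot m R q → PolMaps (q j) δ γ → α (q i a) (q i b) :=
      ⟨hab, fun q hq hqd => hno q hq hqd⟩
    exact hnab ((congrFun (congrFun he a) b).mp hΛab)
  · exfalso
    have hex : ∃ w w', β w w' ∧ ¬ α (p i w) (p i w') := by
      by_contra hc
      push_neg at hc
      exact hpa fun a b hab => hc a b hab
    obtain ⟨w, w', hww, hnw⟩ := hex
    have hΛ : β w w' ∧ ∀ q, RPol dot m R q → PolMaps (q j) δ γ → α (q i w) (q i w') :=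
      (congrFun (congrFun he w) w').mpr hww
    exact hnw (hΛ.2 p hp hpd)

end MoverLemmas

section FixerLemmas

variable {n : ℕ} {F : Fin n → Type*}
variable {dot : ∀ i, F i → F i → F i} {m : ∀ i, F i → F i → F i → F i}
    {σ : ∀ i, F i → F i → Prop} {R : Set (∀ i, F i)}
variable {i j : Fin n} {α β : F i → F i → Prop} {γ δ : F j → F j → Prop}

lemma pair_fixer (hsbm : ∀ k, IsSBM (dot k) (m k) (σ k)) (hR : SubdirectProd dot m R)
    (hcα : IsCong (dot i) (m i) α) (hcβ : IsCong (dot i) (m i) β)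
    (hαβ : RelLE α β)
    (hβθ : RelLE β (ThetaA (dot i) (σ i)))
    (hprime : ∀ r, IsCong (dot i) (m i) r → RelLE α r → RelLE r β → r = α ∨ r = β)
    (hcδ : IsCong (dot j) (m j) δ) (hcγ : IsCong (dot j) (m j) γ)
    {s : ∀ k, F k} (hsR : s ∈ R) (hsi : InMax (dot i) (σ i) (s i))
    (hsj : InMax (dot j) (σ j) (s j))
    (hmove : ∀ a b, β a b → ¬ α a b →
      ∃ q, RPol dot m R q ∧ PolMaps (q j) δ γ ∧ ¬ α (q i a) (q i b))
    (a b : F i) (hab : β a b) (hnab : ¬ α a b) :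
    ∃ q, RPol dot m R q ∧ PolMaps (q j) δ γ ∧
      (∀ y, InMax (dot j) (σ j) (q j y)) ∧ α (q i a) a ∧ α (q i b) b := by
  have Ei := hsbm i
  have Ej := hsbm j
  obtain ⟨xa, hxaR, hxa2⟩ := hR.2.2.2 i a
  obtain ⟨xb, hxbR, hxb2⟩ := hR.2.2.2 i b
  -- the orbit relation
  set ρ : F i → F i → Prop := (fun u v => α u v ∨ ∃ q,
      (RPol dot m R q ∧ PolMaps (q j) δ γ ∧ ∀ x, InMax (dot i) (σ i) (q i x)) ∧
      α u (q i a) ∧ α v (q i b)) with hρdef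
  have ρintro1 : ∀ u v, α u v → ρ u v := by
    intro u v h; rw [hρdef]; exact Or.inl h
  have ρintro2 : ∀ u v (q : ∀ k, F k → F k), RPol dot m R q → PolMaps (q j) δ γ →
      (∀ x, InMax (dot i) (σ i) (q i x)) → α u (q i a) → α v (q i b) → ρ u v := by
    intro u v q h1 h2 h3 h4 h5; rw [hρdef]; exact Or.inr ⟨q, ⟨h1, h2, h3⟩, h4, h5⟩
  have ρelim : ∀ u v, ρ u v → α u v ∨ ∃ q,
      (RPol dot m R q ∧ PolMaps (q j) δ γ ∧ ∀ x, InMax (dot i) (σ i) (q i x)) ∧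
      α u (q i a) ∧ α v (q i b) := by
    intro u v h; rw [hρdef] at h; exact h
  -- swap combinator
  have swap : ∀ q : ∀ k, F k → F k, RPol dot m R q → PolMaps (q j) δ γ →
      (∀ x, InMax (dot i) (σ i) (q i x)) →
      ∃ q', (RPol dot m R q' ∧ PolMaps (q' j) δ γ ∧
        (∀ x, InMax (dot i) (σ i) (q' i x))) ∧ q' i a = q i b ∧ q' i b = q i a := by
    intro q hq hqd hqm
    refine ⟨fun k x => m k (q k (xa k)) (q k x) (q k (xb k)), ⟨?_, ?_, ?_⟩, ?_, ?_⟩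
    · exact RPol.mc (RPol.const _ (rpol_mem hR hq hxaR)) hq
        (RPol.const _ (rpol_mem hR hq hxbR))
    · intro u v huv
      exact hcγ.2.2 _ _ _ _ _ _ (hcγ.1.refl _) (hqd _ _ huv) (hcγ.1.refl _)
    · intro x; exact inmax_m Ei (Or.inr (Or.inl (hqm x)))
    · show m i (q i (xa i)) (q i a) (q i (xb i)) = q i b
      rw [hxa2, hxb2]
      exact malt2 Ei (sigma_of_inmax Ei (hqm b) (hqm a))
    · show m i (q i (xa i)) (q i b) (q i (xb i)) = q i a
      rw [hxa2, hxb2]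
      exact malt1 Ei (sigma_of_inmax Ei (hqm a) (hqm b))
  -- equivalence
  have ρsymm : ∀ u v, ρ u v → ρ v u := by
    intro u v h
    rcases ρelim u v h with h | ⟨q, hq3, h1, h2⟩
    · exact ρintro1 _ _ (hcα.1.symm h)
    · obtain ⟨q', hq3', e1, e2⟩ := swap q hq3.1 hq3.2.1 hq3.2.2
      refine ρintro2 _ _ q' hq3'.1 hq3'.2.1 hq3'.2.2 ?_ ?_
      · rw [e1]; exact h2
      · rw [e2]; exact h1
  have ρtrans : ∀ u v w, ρ u v → ρ v w → ρ u w := by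
    intro u v w h1 h2
    rcases ρelim u v h1 with h1 | ⟨q, hq3, hua, hvb⟩
    · rcases ρelim v w h2 with h2 | ⟨q, hq3, hva, hwb⟩
      · exact ρintro1 _ _ (hcα.1.trans h1 h2)
      · exact ρintro2 _ _ q hq3.1 hq3.2.1 hq3.2.2 (hcα.1.trans h1 hva) hwb
    · rcases ρelim v w h2 with h2 | ⟨q', hq3', hva', hwb'⟩
      · exact ρintro2 _ _ q hq3.1 hq3.2.1 hq3.2.2 hua
          (hcα.1.trans (hcα.1.symm h2) hvb)
      · -- combine q and q'
        have hmid : α (q i b) (q' i a) := hcα.1.trans (hcα.1.symm hvb) hva'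
        have exb : q i (xb i) = q i b := by rw [hxb2]
        have c1 : α (m i (q i a) (q i (xb i)) (q' i a)) (q i a) := by
          rw [exb]
          have c2 : α (m i (q i a) (q i b) (q' i a)) (m i (q i a) (q i b) (q i b)) :=
            hcα.2.2 _ _ _ _ _ _ (hcα.1.refl _) (hcα.1.refl _) (hcα.1.symm hmid)
          rwa [malt1 Ei (sigma_of_inmax Ei (hq3.2.2 a) (hq3.2.2 b))] at c2
        have c3 : m i (q i b) (q i (xb i)) (q' i b) = q' i b := by
          rw [exb]
          exact malt2 Ei (sigma_of_inmax Ei (hq3'.2.2 b) (hq3.2.2 b))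
        refine ρintro2 _ _ (fun k x => m k (q k x) (q k (xb k)) (q' k x))
          (RPol.mc hq3.1 (RPol.const _ (rpol_mem hR hq3.1 hxbR)) hq3'.1) ?_ ?_ ?_ ?_
        · intro u' v' huv
          exact hcγ.2.2 _ _ _ _ _ _ (hq3.2.1 _ _ huv) (hcγ.1.refl _) (hq3'.2.1 _ _ huv)
        · intro x; exact inmax_m Ei (Or.inl (hq3.2.2 x))
        · exact hcα.1.trans hua (hcα.1.symm c1)
        · show α w (m i (q i b) (q i (xb i)) (q' i b))
          rw [c3]; exact hwb'
  have ρequiv : Equivalence ρ :=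
    ⟨fun u => ρintro1 _ _ (hcα.1.refl u), fun {u v} h => ρsymm u v h,
      fun {u v w} h1 h2 => ρtrans u v w h1 h2⟩
  -- elements related to polynomial values are in the max block
  have memmax : ∀ (u : F i) (w : F i), α u w → InMax (dot i) (σ i) w →
      InMax (dot i) (σ i) u := by
    intro u w h hw
    rcases hβθ u w (hαβ _ _ h) with he | he
    · rw [he]; exact hw
    · exact he.1
  -- congruence property
  have ρdot : ∀ x x' y y', ρ x x' → ρ y y' → ρ (dot i x y) (dot i x' y') := by
    intro x x' y y' hx hy
    have step1 : ρ (dot i x y) (dot i x' y) := by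
      rcases ρelim _ _ hx with h | ⟨q, hq3, h1, h2⟩
      · exact ρintro1 _ _ (hcα.2.1 _ _ _ _ h (hcα.1.refl y))
      · have hMx : InMax (dot i) (σ i) x := memmax _ _ h1 (hq3.2.2 a)
        have hMx' : InMax (dot i) (σ i) x' := memmax _ _ h2 (hq3.2.2 b)
        rw [dot_absorb Ei hMx y, dot_absorb Ei hMx' y]
        exact ρintro2 _ _ q hq3.1 hq3.2.1 hq3.2.2 h1 h2
    have step2 : ρ (dot i x' y) (dot i x' y') := by
      rcases ρelim _ _ hy with h | ⟨q, hq3, h1, h2⟩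
      · exact ρintro1 _ _ (hcα.2.1 _ _ _ _ (hcα.1.refl x') h)
      · obtain ⟨xc, hxcR, hxc2⟩ := hR.2.2.2 i x'
        refine ρintro2 _ _ (fun k w => dot k (xc k) (q k w))
          (RPol.dotc (RPol.const xc hxcR) hq3.1) ?_ ?_ ?_ ?_
        · intro u v huv
          exact hcγ.2.1 _ _ _ _ (hcγ.1.refl _) (hq3.2.1 _ _ huv)
        · intro w; exact inmax_dot_right Ei (hq3.2.2 w) (xc i)
        · show α (dot i x' y) (dot i (xc i) (q i a))
          rw [hxc2]; exact hcα.2.1 _ _ _ _ (hcα.1.refl x') h1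
        · show α (dot i x' y') (dot i (xc i) (q i b))
          rw [hxc2]; exact hcα.2.1 _ _ _ _ (hcα.1.refl x') h2
    exact ρtrans _ _ _ step1 step2
  have ρm : ∀ x x' y y' z z', ρ x x' → ρ y y' → ρ z z' →
      ρ (m i x y z) (m i x' y' z') := by
    intro x x' y y' z z' hx hy hz
    obtain ⟨ye, hyeR, hye2⟩ := hR.2.2.2 i y
    obtain ⟨ze, hzeR, hze2⟩ := hR.2.2.2 i z
    obtain ⟨xe, hxeR, hxe2⟩ := hR.2.2.2 i x'
    obtain ⟨yf, hyfR, hyf2⟩ := hR.2.2.2 i y'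
    have step1 : ρ (m i x y z) (m i x' y z) := by
      rcases ρelim _ _ hx with h | ⟨q, hq3, h1, h2⟩
      · exact ρintro1 _ _ (hcα.2.2 _ _ _ _ _ _ h (hcα.1.refl y) (hcα.1.refl z))
      · refine ρintro2 _ _ (fun k w => m k (q k w) (ye k) (ze k))
          (RPol.mc hq3.1 (RPol.const ye hyeR) (RPol.const ze hzeR)) ?_ ?_ ?_ ?_
        · intro u v huv
          exact hcγ.2.2 _ _ _ _ _ _ (hq3.2.1 _ _ huv) (hcγ.1.refl _) (hcγ.1.refl _)
        · intro w; exact inmax_m Ei (Or.inl (hq3.2.2 w))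
        · show α (m i x y z) (m i (q i a) (ye i) (ze i))
          rw [hye2, hze2]
          exact hcα.2.2 _ _ _ _ _ _ h1 (hcα.1.refl y) (hcα.1.refl z)
        · show α (m i x' y z) (m i (q i b) (ye i) (ze i))
          rw [hye2, hze2]
          exact hcα.2.2 _ _ _ _ _ _ h2 (hcα.1.refl y) (hcα.1.refl z)
    have step2 : ρ (m i x' y z) (m i x' y' z) := by
      rcases ρelim _ _ hy with h | ⟨q, hq3, h1, h2⟩
      · exact ρintro1 _ _ (hcα.2.2 _ _ _ _ _ _ (hcα.1.refl x') h (hcα.1.refl z))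
      · refine ρintro2 _ _ (fun k w => m k (xe k) (q k w) (ze k))
          (RPol.mc (RPol.const xe hxeR) hq3.1 (RPol.const ze hzeR)) ?_ ?_ ?_ ?_
        · intro u v huv
          exact hcγ.2.2 _ _ _ _ _ _ (hcγ.1.refl _) (hq3.2.1 _ _ huv) (hcγ.1.refl _)
        · intro w; exact inmax_m Ei (Or.inr (Or.inl (hq3.2.2 w)))
        · show α (m i x' y z) (m i (xe i) (q i a) (ze i))
          rw [hxe2, hze2]
          exact hcα.2.2 _ _ _ _ _ _ (hcα.1.refl x') h1 (hcα.1.refl z)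
        · show α (m i x' y' z) (m i (xe i) (q i b) (ze i))
          rw [hxe2, hze2]
          exact hcα.2.2 _ _ _ _ _ _ (hcα.1.refl x') h2 (hcα.1.refl z)
    have step3 : ρ (m i x' y' z) (m i x' y' z') := by
      rcases ρelim _ _ hz with h | ⟨q, hq3, h1, h2⟩
      · exact ρintro1 _ _ (hcα.2.2 _ _ _ _ _ _ (hcα.1.refl x') (hcα.1.refl y') h)
      · refine ρintro2 _ _ (fun k w => m k (xe k) (yf k) (q k w))
          (RPol.mc (RPol.const xe hxeR) (RPol.const yf hyfR) hq3.1) ?_ ?_ ?_ ?_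
        · intro u v huv
          exact hcγ.2.2 _ _ _ _ _ _ (hcγ.1.refl _) (hcγ.1.refl _) (hq3.2.1 _ _ huv)
        · intro w; exact inmax_m Ei (Or.inr (Or.inr (hq3.2.2 w)))
        · show α (m i x' y' z) (m i (xe i) (yf i) (q i a))
          rw [hxe2, hyf2]
          exact hcα.2.2 _ _ _ _ _ _ (hcα.1.refl x') (hcα.1.refl y') h1
        · show α (m i x' y' z') (m i (xe i) (yf i) (q i b))
          rw [hxe2, hyf2]
          exact hcα.2.2 _ _ _ _ _ _ (hcα.1.refl x') (hcα.1.refl y') h2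
    exact ρtrans _ _ _ step1 (ρtrans _ _ _ step2 step3)
  have hcongρ : IsCong (dot i) (m i) ρ :=
    ⟨ρequiv, fun x x' y y' hx hy => ρdot x x' y y' hx hy,
      fun x x' y y' z z' hx hy hz => ρm x x' y y' z z' hx hy hz⟩
  have hle1 : RelLE α ρ := fun u v h => ρintro1 _ _ h
  have hle2 : RelLE ρ β := by
    intro u v h
    rcases ρelim _ _ h with h | ⟨q, hq3, h1, h2⟩
    · exact hαβ _ _ h
    · exact hcβ.1.trans (hcβ.1.trans (hαβ _ _ h1) (rpol_maps hq3.1 hcβ a b hab))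
        (hcβ.1.symm (hαβ _ _ h2))
  -- ρ is strictly above α thanks to the mover
  obtain ⟨r, hr, hrd, hrm⟩ := hmove a b hab hnab
  have hβr : β (r i a) (r i b) := rpol_maps hr hcβ a b hab
  have hMr : InMax (dot i) (σ i) (r i a) ∧ InMax (dot i) (σ i) (r i b) := by
    rcases hβθ _ _ hβr with he | he
    · exact absurd (he ▸ hcα.1.refl (r i a)) hrm
    · exact he
  have hρr : ρ (r i a) (r i b) := by
    refine ρintro2 _ _ (fun k x => dot k (r k x) (s k))
      (RPol.dotc hr (RPol.const s hsR)) ?_ ?_ ?_ ?_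
    · intro u v huv
      exact hcγ.2.1 _ _ _ _ (hrd _ _ huv) (hcγ.1.refl _)
    · intro x; exact inmax_dot_right Ei hsi (r i x)
    · show α (r i a) (dot i (r i a) (s i))
      rw [dot_absorb Ei hMr.1 (s i)]; exact hcα.1.refl _
    · show α (r i b) (dot i (r i b) (s i))
      rw [dot_absorb Ei hMr.2 (s i)]; exact hcα.1.refl _
  rcases hprime ρ hcongρ hle1 hle2 with he | he
  · exact absurd (he ▸ hρr) hrm
  · have hρab : ρ a b := by rw [he]; exact hab
    rcases ρelim a b hρab with h | ⟨q, hq3, h1, h2⟩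
    · exact absurd h hnab
    · refine ⟨fun k x => dot k (q k x) (s k),
        RPol.dotc hq3.1 (RPol.const s hsR), ?_, ?_, ?_, ?_⟩
      · intro u v huv
        exact hcγ.2.1 _ _ _ _ (hq3.2.1 _ _ huv) (hcγ.1.refl _)
      · intro y; exact inmax_dot_right Ej hsj (q j y)
      · show α (dot i (q i a) (s i)) a
        rw [dot_absorb Ei (hq3.2.2 a) (s i)]; exact hcα.1.symm h1
      · show α (dot i (q i b) (s i)) b
        rw [dot_absorb Ei (hq3.2.2 b) (s i)]; exact hcα.1.symm h2

end FixerLemmas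

/-- Separation of prime intervals in a subdirect product of SBM algebras is symmetric:
if `(α,β)` at coordinate `i` can be separated from `(γ,δ)` at coordinate `j`, then
`(γ,δ)` can be separated from `(α,β)`. -/
theorem separation_symmetric {n : ℕ} {F : Fin n → Type*}
    [∀ i, Fintype (F i)] [∀ i, Nonempty (F i)]
    (dot : ∀ i, F i → F i → F i) (m : ∀ i, F i → F i → F i → F i)
    (σ : ∀ i, F i → F i → Prop)
    (hsbm : ∀ i, IsSBM (dot i) (m i) (σ i))
    (R : Set (∀ i, F i)) (hR : SubdirectProd dot m R)
    (i j : Fin n) (hij : i ≠ j)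
    (α β : F i → F i → Prop) (hi : InIR dot m σ i α β)
    (γ δ : F j → F j → Prop) (hj : InIR dot m σ j γ δ)
    (hsep : SepIn dot m R i α β j γ δ) :
    SepIn dot m R j γ δ i α β := by
  classical
  obtain ⟨hcα, hcβ, hpcov, hβθ⟩ := hi
  obtain ⟨hαβ, hαβne, hprime_i⟩ := hpcov
  obtain ⟨hcγ, hcδ, hpcovj, hδθ⟩ := hj
  obtain ⟨hγδ, hγδne, hprime_j⟩ := hpcovj
  obtain ⟨p, hp, hpa, hpd⟩ := hsep
  have Ei := hsbm i
  have Ej := hsbm j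
  -- a δ-pair outside γ
  have hdd : ∃ d d', δ d d' ∧ ¬ γ d d' := by
    by_contra hc; push_neg at hc
    exact hγδne (funext fun u => funext fun v =>
      propext ⟨fun h => hγδ u v h, fun h => hc u v h⟩)
  obtain ⟨d, d', hdd', hndd'⟩ := hdd
  have hMd : InMax (dot j) (σ j) d ∧ InMax (dot j) (σ j) d' := by
    rcases hδθ d d' hdd' with he | he
    · exact absurd (he ▸ hcγ.1.refl d) hndd'
    · exact he
  -- a β-pair moved by p
  have hex : ∃ w w', β w w' ∧ ¬ α (p i w) (p i w') := by
    by_contra hc; push_neg at hc; exact hpa fun u v huv => hc u v huv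
  obtain ⟨w, w', hww, hnw⟩ := hex
  have hnww : ¬ α w w' := fun h => hnw (rpol_maps hp hcα _ _ h)
  have hMw : InMax (dot i) (σ i) w := by
    rcases hβθ w w' hww with he | he
    · exact absurd (he ▸ hcα.1.refl w) hnww
    · exact he.1
  -- an anchor tuple lying in the maximal blocks at coordinates i and j
  obtain ⟨za, hzaR, hza2⟩ := hR.2.2.2 i w
  obtain ⟨zd, hzdR, hzd2⟩ := hR.2.2.2 j d
  obtain ⟨s, hsR, hsi, hsj⟩ : ∃ s ∈ R, InMax (dot i) (σ i) (s i) ∧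
      InMax (dot j) (σ j) (s j) := by
    refine ⟨fun k => dot k (za k) (zd k), hR.2.1 _ hzaR _ hzdR, ?_, ?_⟩
    · show InMax (dot i) (σ i) (dot i (za i) (zd i))
      rw [hza2, dot_absorb Ei hMw (zd i)]; exact hMw
    · show InMax (dot j) (σ j) (dot j (za j) (zd j))
      rw [hzd2]; exact inmax_dot_right Ej hMd.1 (za j)
  have hmove := exists_mover hR hcα hcβ hαβ hprime_i hcδ hp hpd hpa
  have fixer := pair_fixer hsbm hR hcα hcβ hαβ hβθ hprime_i hcδ hcγ hsR hsi hsj hmove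
  -- the set of β-pairs not yet collapsed to α by Q at coordinate i
  set Bad : (∀ k, F k → F k) → Finset (F i × F i) := fun Q =>
    Finset.univ.filter (fun z => β z.1 z.2 ∧ ¬ α (Q i z.1) (Q i z.2)) with hBad
  -- one collapsing step
  have step : ∀ Q : ∀ k, F k → F k, RPol dot m R Q → (∀ y, δ y d → γ (Q j y) y) →
      (Bad Q).Nonempty → ∃ Q', RPol dot m R Q' ∧ (∀ y, δ y d → γ (Q' j y) y) ∧
        Bad Q' ⊂ Bad Q := by
    intro Q hQ hΦ hne
    obtain ⟨z, hzmem⟩ := hne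
    have hz : β z.1 z.2 ∧ ¬ α (Q i z.1) (Q i z.2) := by
      have := hzmem
      rw [hBad] at this
      simpa only [Finset.mem_filter, Finset.mem_univ, true_and] using this
    have hβu : β (Q i z.1) (Q i z.2) := rpol_maps hQ hcβ _ _ hz.1
    have hMu : InMax (dot i) (σ i) (Q i z.1) ∧ InMax (dot i) (σ i) (Q i z.2) := by
      rcases hβθ _ _ hβu with he | he
      · exact absurd (he ▸ hcα.1.refl _) hz.2
      · exact he
    obtain ⟨e, heR, hed, hemj, hfix1, hfix2⟩ := fixer _ _ hβu hz.2
    obtain ⟨ze, hzeR, hze2⟩ := hR.2.2.2 j d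
    -- the translation constant
    have hwR : (fun k => dot k (e k (ze k)) (s k)) ∈ R :=
      hR.2.1 _ (rpol_mem hR heR hzeR) _ hsR
    have hwi : InMax (dot i) (σ i) (dot i (e i (ze i)) (s i)) :=
      inmax_dot_right Ei hsi (e i (ze i))
    have hwj : dot j (e j (ze j)) (s j) = e j d := by
      rw [hze2]
      exact dot_absorb Ej (hemj d) (s j)
    have hQ'r : RPol dot m R (fun k x =>
        m k (Q k x) (e k (Q k x)) (dot k (e k (ze k)) (s k))) :=
      rpol_comp (RPol.mc RPol.id heR (RPol.const _ hwR)) hQ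
    have hΦ' : ∀ y, δ y d →
        γ (m j (Q j y) (e j (Q j y)) (dot j (e j (ze j)) (s j))) y := by
      intro y hyd
      have hv : γ (Q j y) y := hΦ y hyd
      have hvδ : δ (Q j y) d := hcδ.1.trans (hγδ _ _ hv) hyd
      have hce : γ (e j (Q j y)) (e j d) := hed _ _ hvδ
      have hMy : InMax (dot j) (σ j) y := by
        rcases hδθ y d hyd with he' | he'
        · rw [he']; exact hMd.1
        · exact he'.1
      have hMv : InMax (dot j) (σ j) (Q j y) := by
        rcases hδθ _ _ (hγδ _ _ hv) with he' | he'
        · rw [he']; exact hMy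
        · exact he'.1
      have c1 : γ (m j (Q j y) (e j (Q j y)) (dot j (e j (ze j)) (s j)))
          (m j (Q j y) (e j d) (e j d)) := by
        rw [hwj]
        exact hcγ.2.2 _ _ _ _ _ _ (hcγ.1.refl _) hce (hcγ.1.refl _)
      rw [malt1 Ej (sigma_of_inmax Ej hMv (hemj d))] at c1
      exact hcγ.1.trans c1 hv
    refine ⟨_, hQ'r, hΦ', ?_⟩
    have hsub : Bad (fun k x =>
        m k (Q k x) (e k (Q k x)) (dot k (e k (ze k)) (s k))) ⊆ Bad Q := by
      intro y hy
      rw [hBad] at hy ⊢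
      simp only [Finset.mem_filter, Finset.mem_univ, true_and] at hy ⊢
      refine ⟨hy.1, ?_⟩
      intro hα0
      exact hy.2 (hcα.2.2 _ _ _ _ _ _ hα0 (rpol_maps heR hcα _ _ hα0) (hcα.1.refl _))
    have hznot : z ∉ Bad (fun k x =>
        m k (Q k x) (e k (Q k x)) (dot k (e k (ze k)) (s k))) := by
      rw [hBad]
      simp only [Finset.mem_filter, Finset.mem_univ, true_and, not_and, not_not]
      intro _
      have c1 : α (m i (Q i z.1) (e i (Q i z.1)) (dot i (e i (ze i)) (s i)))
          (dot i (e i (ze i)) (s i)) := by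
        have c2 : α (m i (Q i z.1) (e i (Q i z.1)) (dot i (e i (ze i)) (s i)))
            (m i (Q i z.1) (Q i z.1) (dot i (e i (ze i)) (s i))) :=
          hcα.2.2 _ _ _ _ _ _ (hcα.1.refl _) hfix1 (hcα.1.refl _)
        rwa [malt2 Ei (sigma_of_inmax Ei hwi hMu.1)] at c2
      have c2 : α (m i (Q i z.2) (e i (Q i z.2)) (dot i (e i (ze i)) (s i)))
          (dot i (e i (ze i)) (s i)) := by
        have c3 : α (m i (Q i z.2) (e i (Q i z.2)) (dot i (e i (ze i)) (s i)))
            (m i (Q i z.2) (Q i z.2) (dot i (e i (ze i)) (s i))) :=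
          hcα.2.2 _ _ _ _ _ _ (hcα.1.refl _) hfix2 (hcα.1.refl _)
        rwa [malt2 Ei (sigma_of_inmax Ei hwi hMu.2)] at c3
      exact hcα.1.trans c1 (hcα.1.symm c2)
    exact Finset.ssubset_iff_subset_ne.mpr
      ⟨hsub, fun heq => hznot (by rw [heq]; exact hzmem)⟩
  -- iterate the collapsing step
  have hrec : ∀ N : ℕ, ∀ Q : ∀ k, F k → F k, RPol dot m R Q →
      (∀ y, δ y d → γ (Q j y) y) → (Bad Q).card ≤ N →
      ∃ Q', RPol dot m R Q' ∧ (∀ y, δ y d → γ (Q' j y) y) ∧ Bad Q' = ∅ := by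
    intro N
    induction N with
    | zero =>
      intro Q h1 h2 h3
      exact ⟨Q, h1, h2, Finset.card_eq_zero.mp (Nat.le_zero.mp h3)⟩
    | succ N ih =>
      intro Q h1 h2 h3
      rcases (Bad Q).eq_empty_or_nonempty with he | hne
      · exact ⟨Q, h1, h2, he⟩
      · obtain ⟨Q', hQ', hΦ', hss⟩ := step Q h1 h2 hne
        exact ih Q' hQ' hΦ'
          (Nat.lt_succ_iff.mp (Nat.lt_of_lt_of_le (Finset.card_lt_card hss) h3))
  obtain ⟨Q, hQr, hQΦ, hQbad⟩ := hrec (Bad (fun _ x => x)).card (fun _ x => x) RPol.id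
    (fun y _ => hcγ.1.refl y) le_rfl
  refine ⟨Q, hQr, ?_, ?_⟩
  · intro hPM
    have h1 := hPM d d' hdd'
    have h2 := hQΦ d (hcδ.1.refl d)
    have h3 := hQΦ d' (hcδ.1.symm hdd')
    exact hndd' (hcγ.1.trans (hcγ.1.symm h2) (hcγ.1.trans h1 h3))
  · intro u v huv
    by_contra hno
    have hmem : (u, v) ∈ Bad Q := by
      rw [hBad]
      simp only [Finset.mem_filter, Finset.mem_univ, true_and]
      exact ⟨huv, hno⟩
    rw [hQbad] at hmem
    exact absurd hmem (Finset.notMem_empty _)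

end SBMPaper
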